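/- arXiv:2008.02641 — 5 statements merged into one kernel-verified Lean document; each statement's English description precedes it below -/
import Mathlib

section
/- Let tpr and tnr be real numbers with 1/2 < tpr < 1 and 1/2 < tnr < 1, and let ρ ∈ (0,1). Then the second derivative (iterated derivative of order 2) of the per-pool information gain φ at ρ equals −(1/ln 2)·( (1−2·tnr)²/q₀(ρ) + (2·tpr−1)²/q₁(ρ) ), and this value is strictly negative. -/
open Real

noncomputable def q0 (tnr ρ : ℝ) : ℝ := (1 - 2 * tnr) * ρ + tnr
noncomputable def q1 (tpr ρ : ℝ) : ℝ := (2 * tpr - 1) * ρ + (1 - tpr)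
noncomputable def betaC (tnr : ℝ) : ℝ := tnr * logb 2 tnr + (1 - tnr) * logb 2 (1 - tnr)
noncomputable def alphaC (tpr : ℝ) : ℝ := tpr * logb 2 tpr + (1 - tpr) * logb 2 (1 - tpr)
noncomputable def infoGain (tpr tnr ρ : ℝ) : ℝ :=
  -(q0 tnr ρ * logb 2 (q0 tnr ρ)) - q1 tpr ρ * logb 2 (q1 tpr ρ)
    + (1 - ρ) * betaC tnr + ρ * alphaC tpr

lemma hasDerivAt_affine (c a x : ℝ) : HasDerivAt (fun y => c * y + a) c x := by
  simpa using ((hasDerivAt_id x).const_mul c).add_const a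

lemma hasDerivAt_log_affine (c a x : ℝ) (h : c * x + a ≠ 0) :
    HasDerivAt (fun y => Real.log (c * y + a)) (c / (c * x + a)) x := by
  have := (Real.hasDerivAt_log h).comp x (hasDerivAt_affine c a x)
  simpa [div_eq_inv_mul, Function.comp_def] using this

lemma hasDerivAt_affine_mul_log (c a x : ℝ) (h : c * x + a ≠ 0) :
    HasDerivAt (fun y => (c * y + a) * Real.log (c * y + a))
      (c * Real.log (c * x + a) + c) x := by
  have := (hasDerivAt_affine c a x).mul (hasDerivAt_log_affine c a x h)
  rw [mul_div_cancel₀ _ h] at this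
  exact this

theorem per_pool_info_gain_second_deriv (tpr tnr : ℝ)
    (htpr1 : 1 / 2 < tpr) (htpr2 : tpr < 1)
    (htnr1 : 1 / 2 < tnr) (htnr2 : tnr < 1)
    (ρ : ℝ) (hρ : ρ ∈ Set.Ioo (0 : ℝ) 1) :
    iteratedDeriv 2 (infoGain tpr tnr) ρ
      = -(1 / Real.log 2) * ((1 - 2 * tnr) ^ 2 / q0 tnr ρ + (2 * tpr - 1) ^ 2 / q1 tpr ρ) ∧
    iteratedDeriv 2 (infoGain tpr tnr) ρ < 0 := by
  obtain ⟨hρ0, hρ1⟩ := hρ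
  set c0 : ℝ := 1 - 2 * tnr with hc0
  set c1 : ℝ := 2 * tpr - 1 with hc1
  have hq0pos : ∀ x ∈ Set.Ioo (0:ℝ) 1, 0 < c0 * x + tnr := by
    intro x hx
    obtain ⟨hx0, hx1⟩ := hx
    nlinarith [mul_pos (by linarith : (0:ℝ) < 2 * tnr - 1) (by linarith : (0:ℝ) < 1 - x)]
  have hq1pos : ∀ x ∈ Set.Ioo (0:ℝ) 1, 0 < c1 * x + (1 - tpr) := by
    intro x hx
    obtain ⟨hx0, hx1⟩ := hx
    nlinarith [mul_pos (by linarith : (0:ℝ) < 2 * tpr - 1) hx0]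
  have hρmem : ρ ∈ Set.Ioo (0:ℝ) 1 := ⟨hρ0, hρ1⟩
  have hq0ρ : 0 < c0 * ρ + tnr := hq0pos ρ hρmem
  have hq1ρ : 0 < c1 * ρ + (1 - tpr) := hq1pos ρ hρmem
  have hlog2 : (0:ℝ) < Real.log 2 := Real.log_pos (by norm_num)
  -- rewrite infoGain
  have hInfo : infoGain tpr tnr = fun x =>
      (-((c0 * x + tnr) * Real.log (c0 * x + tnr))
        - (c1 * x + (1 - tpr)) * Real.log (c1 * x + (1 - tpr))) / Real.log 2
      + ((1 - x) * betaC tnr + x * alphaC tpr) := by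
    funext x
    simp only [infoGain, q0, q1, Real.logb, hc0, hc1]
    ring
  set g : ℝ → ℝ := fun x =>
    (-(c0 * Real.log (c0 * x + tnr) + c0)
      - (c1 * Real.log (c1 * x + (1 - tpr)) + c1)) / Real.log 2
    + (-betaC tnr + alphaC tpr) with hg
  have hderiv1 : ∀ x ∈ Set.Ioo (0:ℝ) 1, HasDerivAt (infoGain tpr tnr) (g x) x := by
    intro x hx
    rw [hInfo]
    have h0 := hasDerivAt_affine_mul_log c0 tnr x (ne_of_gt (hq0pos x hx))
    have h1 := hasDerivAt_affine_mul_log c1 (1 - tpr) x (ne_of_gt (hq1pos x hx))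
    have hlin : HasDerivAt (fun y => (1 - y) * betaC tnr + y * alphaC tpr)
        (-betaC tnr + alphaC tpr) x := by
      have := (((hasDerivAt_id x).const_sub 1).mul_const (betaC tnr)).add
        ((hasDerivAt_id x).mul_const (alphaC tpr))
      simpa [Pi.add_def] using this
    have := ((h0.neg.sub h1).div_const (Real.log 2)).add hlin
    simpa [hg, Pi.add_def] using this
  have hev : deriv (infoGain tpr tnr) =ᶠ[nhds ρ] g := by
    filter_upwards [Ioo_mem_nhds hρ0 hρ1] with x hx
    exact (hderiv1 x hx).deriv
  have hL0 := hasDerivAt_log_affine c0 tnr ρ (ne_of_gt hq0ρ)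
  have hL1 := hasDerivAt_log_affine c1 (1 - tpr) ρ (ne_of_gt hq1ρ)
  have hgderiv : HasDerivAt g
      ((-(c0 * (c0 / (c0 * ρ + tnr)) + 0)
        - (c1 * (c1 / (c1 * ρ + (1 - tpr))) + 0)) / Real.log 2 + 0) ρ := by
    have := ((((hL0.const_mul c0).add_const c0).neg.sub
      ((hL1.const_mul c1).add_const c1)).div_const (Real.log 2)).add_const
      (-betaC tnr + alphaC tpr)
    simpa [hg] using this
  have hkey : iteratedDeriv 2 (infoGain tpr tnr) ρ
      = (-(c0 * (c0 / (c0 * ρ + tnr)))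
        - c1 * (c1 / (c1 * ρ + (1 - tpr)))) / Real.log 2 := by
    rw [iteratedDeriv_succ, iteratedDeriv_one, hev.deriv_eq]
    simpa using hgderiv.deriv
  have heq : iteratedDeriv 2 (infoGain tpr tnr) ρ
      = -(1 / Real.log 2) * ((1 - 2 * tnr) ^ 2 / q0 tnr ρ + (2 * tpr - 1) ^ 2 / q1 tpr ρ) := by
    rw [hkey]
    have h0 : q0 tnr ρ = c0 * ρ + tnr := by simp [q0, hc0]
    have h1 : q1 tpr ρ = c1 * ρ + (1 - tpr) := by simp [q1, hc1]
    rw [h0, h1]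
    field_simp
    ring
  refine ⟨heq, ?_⟩
  rw [heq]
  have h0 : q0 tnr ρ = c0 * ρ + tnr := by simp [q0, hc0]
  have h1 : q1 tpr ρ = c1 * ρ + (1 - tpr) := by simp [q1, hc1]
  have hc0ne : (1 - 2 * tnr) ≠ 0 := by intro h; nlinarith
  have hc1ne : (2 * tpr - 1) ≠ 0 := by intro h; nlinarith
  have hposA : 0 < (1 - 2 * tnr) ^ 2 / q0 tnr ρ := by
    rw [h0]; positivity
  have hposB : 0 < (2 * tpr - 1) ^ 2 / q1 tpr ρ := by
    rw [h1]; positivity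
  have : 0 < (1 / Real.log 2) * ((1 - 2 * tnr) ^ 2 / q0 tnr ρ + (2 * tpr - 1) ^ 2 / q1 tpr ρ) := by
    apply mul_pos (by positivity) (by linarith)
  linarith
end

section
/- Let tpr and tnr be real numbers with 1/2 < tpr < 1 and 1/2 < tnr < 1. Then there exists a unique ρ* ∈ [0,1] (depending only on tpr and tnr) such that φ(ρ) ≤ φ(ρ*) for all ρ ∈ [0,1]; consequently, for every number of pools B ∈ ℕ and every assignment of pool-positive probabilities ρ : Fin B → [0,1], the total information gain ∑_{b} φ(ρ b) is at most B·φ(ρ*). -/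
open Real

lemma infoGain_eq (tpr tnr ρ : ℝ) :
    infoGain tpr tnr ρ = (Real.log 2)⁻¹ * Real.negMulLog (q0 tnr ρ)
      + (Real.log 2)⁻¹ * Real.negMulLog (q1 tpr ρ)
      + ((1 - ρ) * betaC tnr + ρ * alphaC tpr) := by
  simp only [infoGain, Real.negMulLog, Real.logb, div_eq_mul_inv]
  ring

lemma myConstMul {c : ℝ} (hc : 0 < c) {s : Set ℝ} {f : ℝ → ℝ}
    (hf : StrictConcaveOn ℝ s f) : StrictConcaveOn ℝ s (fun x => c * f x) := by
  refine ⟨hf.1, fun x hx y hy hxy a b ha hb hab => ?_⟩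
  have := hf.2 hx hy hxy ha hb hab
  simp only [smul_eq_mul] at *
  nlinarith

lemma myCompAffine {f : ℝ → ℝ} (hf : StrictConcaveOn ℝ (Set.Ici 0) f)
    {a b : ℝ} (ha : a ≠ 0) {s : Set ℝ} (hs : Convex ℝ s)
    (hmap : ∀ x ∈ s, 0 ≤ a * x + b) :
    StrictConcaveOn ℝ s (fun x => f (a * x + b)) := by
  refine ⟨hs, fun x hx y hy hxy p q hp hq hpq => ?_⟩
  have h1 : a * (p • x + q • y) + b = p • (a * x + b) + q • (a * y + b) := by
    simp only [smul_eq_mul]; linear_combination (-b) * hpq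
  dsimp only
  rw [h1]
  exact hf.2 (hmap x hx) (hmap y hy)
    (fun h => hxy (mul_left_cancel₀ ha (add_right_cancel h))) hp hq hpq

theorem per_pool_info_gain_unique_max (tpr tnr : ℝ)
    (htpr1 : 1 / 2 < tpr) (htpr2 : tpr < 1)
    (htnr1 : 1 / 2 < tnr) (htnr2 : tnr < 1) :
    ∃ ρstar ∈ Set.Icc (0 : ℝ) 1,
      (∀ ρ ∈ Set.Icc (0 : ℝ) 1, infoGain tpr tnr ρ ≤ infoGain tpr tnr ρstar) ∧
      (∀ ρ' ∈ Set.Icc (0 : ℝ) 1,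
        (∀ ρ ∈ Set.Icc (0 : ℝ) 1, infoGain tpr tnr ρ ≤ infoGain tpr tnr ρ') → ρ' = ρstar) ∧
      (∀ (B : ℕ) (ρ : Fin B → ℝ), (∀ b, ρ b ∈ Set.Icc (0 : ℝ) 1) →
        ∑ b, infoGain tpr tnr (ρ b) ≤ B * infoGain tpr tnr ρstar) := by
  have hlog2 : (0 : ℝ) < (Real.log 2)⁻¹ := by
    have := Real.log_pos (by norm_num : (1:ℝ) < 2); positivity
  -- continuity
  have hcont : Continuous (infoGain tpr tnr) := by
    have : Continuous (fun ρ => (Real.log 2)⁻¹ * Real.negMulLog (q0 tnr ρ)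
        + (Real.log 2)⁻¹ * Real.negMulLog (q1 tpr ρ)
        + ((1 - ρ) * betaC tnr + ρ * alphaC tpr)) := by
      unfold q0 q1; fun_prop
    simpa only [← infoGain_eq] using this
  -- strict concavity
  have hconc : StrictConcaveOn ℝ (Set.Icc (0:ℝ) 1) (infoGain tpr tnr) := by
    have h0 : StrictConcaveOn ℝ (Set.Icc (0:ℝ) 1)
        (fun ρ => (Real.log 2)⁻¹ * Real.negMulLog (q0 tnr ρ)) := by
      refine myConstMul hlog2 ?_
      refine myCompAffine Real.strictConcaveOn_negMulLog ?_ (convex_Icc 0 1) ?_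
      · intro h; nlinarith
      · rintro x ⟨hx0, hx1⟩; nlinarith
    have h1 : StrictConcaveOn ℝ (Set.Icc (0:ℝ) 1)
        (fun ρ => (Real.log 2)⁻¹ * Real.negMulLog (q1 tpr ρ)) := by
      refine myConstMul hlog2 ?_
      refine myCompAffine Real.strictConcaveOn_negMulLog ?_ (convex_Icc 0 1) ?_
      · intro h; nlinarith
      · rintro x ⟨hx0, hx1⟩; nlinarith
    have hlin : ConcaveOn ℝ (Set.Icc (0:ℝ) 1)
        (fun ρ => (1 - ρ) * betaC tnr + ρ * alphaC tpr) := by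
      refine ⟨convex_Icc 0 1, fun x hx y hy p q hp hq hpq => ?_⟩
      apply le_of_eq
      simp only [smul_eq_mul]
      linear_combination (betaC tnr) * hpq
    have hsum := (h0.add h1).add_concaveOn hlin
    have hfun : infoGain tpr tnr = (((fun ρ => (Real.log 2)⁻¹ * Real.negMulLog (q0 tnr ρ))
        + fun ρ => (Real.log 2)⁻¹ * Real.negMulLog (q1 tpr ρ))
        + fun ρ => (1 - ρ) * betaC tnr + ρ * alphaC tpr) := by
      funext ρ
      simp only [Pi.add_apply]
      rw [infoGain_eq]
    rw [hfun]
    exact hsum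
  obtain ⟨ρstar, hρstar, hmax⟩ :=
    (isCompact_Icc (a := (0:ℝ)) (b := 1)).exists_isMaxOn (Set.nonempty_Icc.2 zero_le_one)
      hcont.continuousOn
  refine ⟨ρstar, hρstar, fun ρ hρ => hmax hρ, ?_, ?_⟩
  · intro ρ' hρ' hmax'
    exact hconc.eq_of_isMaxOn (fun x hx => hmax' x hx) hmax hρ' hρstar
  · intro B ρ hρ
    calc ∑ b, infoGain tpr tnr (ρ b) ≤ ∑ _b : Fin B, infoGain tpr tnr ρstar :=
          Finset.sum_le_sum (fun b _ => hmax (hρ b))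
      _ = B * infoGain tpr tnr ρstar := by simp [mul_comm]
end

section
/- Let τ be a real number with 1/2 < τ < 1 and set tpr = tnr = τ. Then the per-pool information gain φ satisfies φ(ρ) ≤ φ(1/2) for all ρ ∈ [0,1]; that is, when the true positive rate equals the true negative rate, the optimal pool-positive probability is 1/2. -/
open Real

lemma info_eq (τ ρ : ℝ) :
    infoGain τ τ ρ = Real.binEntropy (q0 τ ρ) / Real.log 2 + betaC τ := by
  have hq : q1 τ ρ = 1 - q0 τ ρ := by unfold q0 q1; ring
  unfold infoGain alphaC betaC
  rw [hq]
  unfold Real.binEntropy Real.logb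
  rw [Real.log_inv, Real.log_inv]
  field_simp
  ring

theorem per_pool_info_gain_symmetric_max_at_half (τ : ℝ)
    (hτ1 : 1 / 2 < τ) (hτ2 : τ < 1) :
    ∀ ρ ∈ Set.Icc (0 : ℝ) 1, infoGain τ τ ρ ≤ infoGain τ τ (1 / 2) := by
  intro ρ hρ
  rw [info_eq, info_eq]
  have h2 : q0 τ (1/2) = 2⁻¹ := by unfold q0; ring
  rw [h2, Real.binEntropy_two_inv]
  have hl : (0:ℝ) < Real.log 2 := Real.log_pos one_lt_two
  have h := Real.binEntropy_le_log_two (p := q0 τ ρ)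
  gcongr
end

section
/- Let λ, μ, λ̃, μ̃, ε be real numbers with ε ≥ 0, 0 ≤ λ̃ ≤ λ, 0 ≤ μ̃ ≤ μ, λ − λ̃ ≤ 2ε, μ − μ̃ ≤ 2ε, λ̃ + μ̃ > 0 and λ + μ > 3ε. Then (λ−2ε)/(λ+μ) ≤ λ̃/(λ̃+μ̃) ≤ λ/(λ+μ−3ε). -/
theorem mitm_reverse_interval (lam mu lamT muT ε : ℝ) (hε : 0 ≤ ε)
    (hlam : 0 ≤ lamT) (hlam' : lamT ≤ lam)
    (hmu : 0 ≤ muT) (hmu' : muT ≤ mu)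
    (hlamε : lam - lamT ≤ 2 * ε) (hmuε : mu - muT ≤ 2 * ε)
    (hpost : 0 < lamT + muT) (hpos : 3 * ε < lam + mu) :
    (lam - 2 * ε) / (lam + mu) ≤ lamT / (lamT + muT) ∧
      lamT / (lamT + muT) ≤ lam / (lam + mu - 3 * ε) := by
  have h1 : 0 < lam + mu := by linarith
  have h2 : 0 < lam + mu - 3 * ε := by linarith
  constructor
  · rw [div_le_div_iff₀ h1 hpost]
    nlinarith [mul_nonneg hmu (sub_nonneg.2 hlamε), mul_nonneg hlam (sub_nonneg.2 hmuε)]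
  · rw [div_le_div_iff₀ hpost h2]
    nlinarith [mul_nonneg hlam (sub_nonneg.2 hmuε), mul_nonneg hmu (sub_nonneg.2 hlam')]
end

section
/- Let ρ be a real number with 0 < ρ ≤ 1/e, and set k := (1−ρ)/ρ. Then (1/k)·√(1 − (1−ρ)^k)·(1−ρ)^{1−k/2} ≤ √(ρ·(1−ρ)), where the powers of (1−ρ) are real powers; equivalently, ρ·√((1−ρ)^{−k} − 1) ≤ √(ρ·(1−ρ)). That is, the asymptotic standard deviation of the pooled (Bloom filter) prevalence estimator with pool size k = (1−ρ)/ρ is at most that of the individual-test estimator whenever the prevalence ρ is at most 1/e. -/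
theorem bloom_prevalence_estimator_variance (ρ : ℝ)
    (hρ : 0 < ρ) (hρe : ρ ≤ 1 / Real.exp 1) :
    (1 / ((1 - ρ) / ρ)) * Real.sqrt (1 - (1 - ρ) ^ ((1 - ρ) / ρ))
        * (1 - ρ) ^ (1 - ((1 - ρ) / ρ) / 2)
      ≤ Real.sqrt (ρ * (1 - ρ)) ∧
    ρ * Real.sqrt ((1 - ρ) ^ (-((1 - ρ) / ρ)) - 1) ≤ Real.sqrt (ρ * (1 - ρ)) := by
  have he2 : (2:ℝ) ≤ Real.exp 1 := by
    have := Real.add_one_le_exp 1; linarith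
  have hρ1 : ρ < 1 := by
    have : (1:ℝ) / Real.exp 1 < 1 := by
      rw [div_lt_one (Real.exp_pos 1)]; linarith
    linarith
  set x : ℝ := 1 - ρ with hxdef
  have hx : 0 < x := by simp [hxdef]; linarith
  have hx1 : x < 1 := by simp [hxdef]; linarith
  set k : ℝ := x / ρ with hkdef
  have hk : 0 < k := div_pos hx hρ
  -- key: ρ ≤ x ^ k
  have hlog : -(ρ / x) ≤ Real.log x := by
    have h := Real.log_le_sub_one_of_pos (show (0:ℝ) < 1/x by positivity)
    rw [one_div, Real.log_inv] at h
    have : (x:ℝ)⁻¹ - 1 = ρ / x := by field_simp [hxdef]; linarith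
    linarith [this ▸ h]
  have hρx : ρ ≤ x ^ k := by
    have h2 : k * (-(ρ / x)) ≤ k * Real.log x :=
      mul_le_mul_of_nonneg_left hlog hk.le
    have h3 : k * (-(ρ / x)) = -1 := by
      rw [hkdef, mul_neg, div_mul_div_comm, mul_comm x ρ, div_self (by positivity)]
    have h4 : Real.exp (-1) ≤ Real.exp (k * Real.log x) := by
      apply Real.exp_le_exp.mpr; linarith
    have h5 : x ^ k = Real.exp (Real.log x * k) := Real.rpow_def_of_pos hx k
    have h6 : Real.exp (-1) = 1 / Real.exp 1 := by
      rw [Real.exp_neg]; ring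
    rw [h5, mul_comm]
    calc ρ ≤ 1 / Real.exp 1 := hρe
      _ = Real.exp (-1) := h6.symm
      _ ≤ _ := h4
  have hxk_pos : 0 < x ^ k := Real.rpow_pos_of_pos hx k
  have hxk_le1 : x ^ k ≤ 1 := Real.rpow_le_one hx.le hx1.le hk.le
  have hA : x ^ (-k) ≤ 1 / ρ := by
    rw [Real.rpow_neg hx.le, ← one_div]
    exact one_div_le_one_div_of_le hρ hρx
  have hA1 : 1 ≤ x ^ (-k) := by
    rw [Real.rpow_neg hx.le]
    exact (one_le_inv₀ hxk_pos).mpr hxk_le1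
  -- second inequality
  have second : ρ * Real.sqrt (x ^ (-k) - 1) ≤ Real.sqrt (ρ * x) := by
    have heq : ρ * Real.sqrt (x ^ (-k) - 1) = Real.sqrt (ρ ^ 2 * (x ^ (-k) - 1)) := by
      rw [Real.sqrt_mul (sq_nonneg ρ), Real.sqrt_sq hρ.le]
    rw [heq]
    apply Real.sqrt_le_sqrt
    have : ρ ^ 2 * x ^ (-k) ≤ ρ := by
      have := mul_le_mul_of_nonneg_left hA (sq_nonneg ρ)
      calc ρ ^ 2 * x ^ (-k) ≤ ρ ^ 2 * (1 / ρ) := this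
        _ = ρ := by field_simp
    nlinarith [hx]
  refine ⟨?_, second⟩
  -- first: show LHS equals the second LHS
  have hmul : x ^ k * x ^ (-k) = 1 := by
    rw [← Real.rpow_add hx]; simp
  have hsq : x ^ (-(k/2)) = Real.sqrt (x ^ (-k)) := by
    have h7 : x ^ (-k) = (x ^ (-(k/2))) ^ 2 := by
      rw [← Real.rpow_natCast (x ^ (-(k/2))) 2, ← Real.rpow_mul hx.le]
      norm_num
    rw [h7, Real.sqrt_sq (Real.rpow_nonneg hx.le _)]
  have hsplit : x ^ ((1:ℝ) - k/2) = x * x ^ (-(k/2)) := by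
    have : (1:ℝ) - k/2 = 1 + (-(k/2)) := by ring
    rw [this, Real.rpow_add hx, Real.rpow_one]
  have hprod : Real.sqrt (1 - x ^ k) * Real.sqrt (x ^ (-k)) = Real.sqrt (x ^ (-k) - 1) := by
    rw [← Real.sqrt_mul (by linarith : (0:ℝ) ≤ 1 - x ^ k)]
    congr 1
    rw [sub_mul, one_mul, hmul]
  have h1k : 1 / k = ρ / x := one_div_div x ρ
  calc (1 / k) * Real.sqrt (1 - x ^ k) * x ^ ((1:ℝ) - k / 2)
      = (ρ / x) * Real.sqrt (1 - x ^ k) * (x * Real.sqrt (x ^ (-k))) := by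
        rw [h1k, hsplit, hsq]
    _ = ρ * (Real.sqrt (1 - x ^ k) * Real.sqrt (x ^ (-k))) := by
        field_simp
    _ = ρ * Real.sqrt (x ^ (-k) - 1) := by rw [hprod]
    _ ≤ Real.sqrt (ρ * x) := second
end
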